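/- Both deficiency indices of $T$ are infinite: the subspaces $\ker(T^* - i\,\mathrm{id}) = \{ g \in D(T^*) : T^* g = i g \}$ and $\ker(T^* + i\,\mathrm{id}) = \{ g \in D(T^*) : T^* g = -i g \}$ are both infinite-dimensional complex subspaces of $\ell^2(\mathbb{N}\times\mathbb{N};\mathbb{C})$. In particular, $T$ is not essentially self-adjoint. -/

import Mathlib

noncomputable section
open scoped ENNReal ComplexConjugate

/-- The Hilbert space `ℓ²(ℕ×ℕ; ℂ)`. -/
abbrev H2 : Type := lp (fun _ : ℕ × ℕ => ℂ) 2

/-- `β(m,n) = (1/2)·√(m+1)·(1-m-n)`. -/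
def beta (m n : ℕ) : ℝ := (1 / 2) * Real.sqrt ((m : ℝ) + 1) * (1 - (m : ℝ) - (n : ℝ))

/-- The formal Jacobi-type action
`(T g)(m,n) = β(m,n) g(m+1,n) + β(m-1,n) g(m-1,n)`, with the convention `β(-1,n) = 0`. -/
def jacobiAct (g : ℕ × ℕ → ℂ) : ℕ × ℕ → ℂ := fun p =>
  (beta p.1 p.2 : ℂ) * g (p.1 + 1, p.2) +
    (if p.1 = 0 then 0 else (beta (p.1 - 1) p.2 : ℂ) * g (p.1 - 1, p.2))

namespace CP

/-- `|β(m,n)|` for `n ≥ 2`. -/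
def B (m n : ℕ) : ℝ := (1 / 2) * Real.sqrt ((m : ℝ) + 1) * ((m : ℝ) + (n : ℝ) - 1)

lemma B_pos {m n : ℕ} (hn : 2 ≤ n) : 0 < B m n := by
  have h1 : (0:ℝ) < Real.sqrt ((m:ℝ) + 1) := Real.sqrt_pos.2 (by positivity)
  have h2 : (2:ℝ) ≤ (n:ℝ) := by exact_mod_cast hn
  have : (0:ℝ) < (m:ℝ) + n - 1 := by
    have : (0:ℝ) ≤ (m:ℝ) := Nat.cast_nonneg m
    linarith
  unfold B; positivity

lemma beta_eq_neg_B (m n : ℕ) : beta m n = -B m n := by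
  unfold beta B; ring

lemma beta_ne {m n : ℕ} (hn : 2 ≤ n) : beta m n ≠ 0 := by
  rw [beta_eq_neg_B]
  exact neg_ne_zero.2 (B_pos hn).ne'

lemma norm_beta {m n : ℕ} (hn : 2 ≤ n) : ‖((beta m n : ℝ) : ℂ)‖ = B m n := by
  rw [Complex.norm_real, beta_eq_neg_B, norm_neg, Real.norm_of_nonneg (B_pos hn).le]

/-- The solution of the eigenvalue recursion in column `n`. -/
def xseq (n : ℕ) : ℕ → ℂ
  | 0 => 1
  | 1 => Complex.I / (beta 0 n : ℂ)
  | (m+2) => (Complex.I * xseq n (m+1) - (beta m n : ℂ) * xseq n m) / (beta (m+1) n : ℂ)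

lemma eigen {n : ℕ} (hn : 2 ≤ n) (m : ℕ) :
    (beta m n : ℂ) * xseq n (m+1) +
      (if m = 0 then 0 else (beta (m-1) n : ℂ) * xseq n (m-1)) = Complex.I * xseq n m := by
  match m with
  | 0 =>
    have hb : ((beta 0 n : ℝ) : ℂ) ≠ 0 := Complex.ofReal_ne_zero.2 (beta_ne hn)
    show (beta 0 n : ℂ) * xseq n 1 + 0 = Complex.I * xseq n 0
    simp only [xseq]
    rw [mul_comm, div_mul_cancel₀ _ hb, add_zero, mul_one]
  | (m+1) =>
    have hb : ((beta (m+1) n : ℝ) : ℂ) ≠ 0 := Complex.ofReal_ne_zero.2 (beta_ne hn)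
    simp only [Nat.add_sub_cancel, if_neg (Nat.succ_ne_zero m)]
    show (beta (m+1) n : ℂ) * xseq n (m+2) + _ = _
    rw [xseq, mul_comm, div_mul_cancel₀ _ hb]
    ring
/-- fourth root of m+1 -/
def q (m : ℕ) : ℝ := Real.sqrt (Real.sqrt ((m : ℝ) + 1))

def w (n m : ℕ) : ℝ := 1 / (q m * Real.sqrt ((m : ℝ) + (n : ℝ)))

def dlt (m : ℕ) : ℝ := 4 / (((m : ℝ) + 1) * Real.sqrt ((m : ℝ) + 1))

def E (m : ℕ) : ℝ := ∏ i ∈ Finset.range m, (1 + dlt i)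

lemma q_pos (m : ℕ) : 0 < q m := by
  unfold q
  positivity

lemma w_pos {n : ℕ} (hn : 2 ≤ n) (m : ℕ) : 0 < w n m := by
  have hq := q_pos m
  have h2 : (2:ℝ) ≤ (n:ℝ) := by exact_mod_cast hn
  have hs : (0:ℝ) < Real.sqrt ((m:ℝ) + (n:ℝ)) := Real.sqrt_pos.2 (by positivity)
  unfold w; positivity

lemma dlt_pos (m : ℕ) : 0 < dlt m := by
  have : (0:ℝ) < Real.sqrt ((m:ℝ)+1) := Real.sqrt_pos.2 (by positivity)
  unfold dlt; positivity

lemma E_succ (m : ℕ) : E (m+1) = E m * (1 + dlt m) := Finset.prod_range_succ _ m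

lemma one_le_E (m : ℕ) : 1 ≤ E m := by
  induction m with
  | zero => simp [E]
  | succ m ih =>
    rw [E_succ]
    nlinarith [dlt_pos m]

lemma E_pos (m : ℕ) : 0 < E m := lt_of_lt_of_le one_pos (one_le_E m)

lemma E_mono (m : ℕ) : E m ≤ E (m+1) := by
  rw [E_succ]
  nlinarith [E_pos m, dlt_pos m, one_le_E m]

/-- telescoping comparison sequence -/
def tg (i : ℕ) : ℝ := 16 / Real.sqrt ((i:ℝ) + 1)

lemma dlt_le (i : ℕ) : dlt i ≤ tg i - tg (i+1) := by
  have hcast : ((i:ℝ) + 1) + 1 = (i:ℝ) + 2 := by ring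
  have htg1 : tg (i+1) = 16 / Real.sqrt ((i:ℝ) + 2) := by
    unfold tg; push_cast; rw [hcast]
  set a := Real.sqrt ((i:ℝ)+1) with ha'
  set b := Real.sqrt ((i:ℝ)+2) with hb'
  have ha : 0 < a := Real.sqrt_pos.2 (by positivity)
  have hb : 0 < b := Real.sqrt_pos.2 (by positivity)
  have ha2 : a^2 = (i:ℝ)+1 := Real.sq_sqrt (by positivity)
  have hb2 : b^2 = (i:ℝ)+2 := Real.sq_sqrt (by positivity)
  have hab : a ≤ b := Real.sqrt_le_sqrt (by norm_num)
  have h1 : 1 ≤ a^2 := by rw [ha2]; norm_num [Nat.cast_nonneg]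
  have h3 : a*b + b^2 ≤ 4*a^2 := by nlinarith
  have key : 4 * (a * b * (a + b)) ≤ 16 * (a^2 * a) := by nlinarith
  have hre : tg i - tg (i+1) = 16 / (a * b * (a + b)) := by
    rw [htg1]
    show 16 / a - 16 / b = _
    rw [div_sub_div _ _ ha.ne' hb.ne', div_eq_div_iff (by positivity) (by positivity)]
    ring_nf
    nlinarith
  rw [hre]
  show 4 / (((i:ℝ)+1) * a) ≤ _
  rw [← ha2, div_le_div_iff₀ (by positivity) (by positivity)]
  nlinarith

lemma sum_dlt_le (m : ℕ) : ∑ i ∈ Finset.range m, dlt i ≤ 16 := by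
  have h : ∑ i ∈ Finset.range m, dlt i ≤ ∑ i ∈ Finset.range m, (tg i - tg (i+1)) :=
    Finset.sum_le_sum fun i _ => dlt_le i
  rw [Finset.sum_range_sub' tg m] at h
  have h0 : tg 0 = 16 := by simp [tg]
  have h1 : 0 ≤ tg m := by unfold tg; positivity
  linarith

lemma E_le (m : ℕ) : E m ≤ Real.exp 16 := by
  have h : E m ≤ Real.exp (∑ i ∈ Finset.range m, dlt i) := by
    rw [Real.exp_sum]
    refine Finset.prod_le_prod (fun i _ => by linarith [dlt_pos i]) fun i _ => ?_
    linarith [Real.add_one_le_exp (dlt i)]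
  exact h.trans (Real.exp_le_exp.2 (sum_dlt_le m))

lemma le_of_pow4 {x y : ℝ} (hy : 0 ≤ y) (h : x^4 ≤ y^4) : x ≤ y :=
  le_of_pow_le_pow_left₀ (by norm_num) hy h

lemma pow4_sqrt_sqrt {a : ℝ} (ha : 0 ≤ a) : (Real.sqrt (Real.sqrt a))^4 = a := by
  have h1 : (Real.sqrt (Real.sqrt a))^4 = ((Real.sqrt (Real.sqrt a))^2)^2 := by ring
  rw [h1, Real.sq_sqrt (Real.sqrt_nonneg a), Real.sq_sqrt ha]

lemma pow4_sqrt {a : ℝ} (ha : 0 ≤ a) : (Real.sqrt a)^4 = a^2 := by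
  have h1 : (Real.sqrt a)^4 = ((Real.sqrt a)^2)^2 := by ring
  rw [h1, Real.sq_sqrt ha]

/-- core polynomial inequality for (A) -/
lemma polyA {m s : ℝ} (hm : 0 ≤ m) (hs : m + 2 ≤ s) :
    ((m+1)^2 * (s-1)^4) * ((m+3) * (s+2)^2) ≤ ((m+2)^2 * s^4) * ((m+1) * s^2) := by
  have hs2 : (2:ℝ) ≤ s := by linarith
  have h1 : (m+1)*(m+3) ≤ (m+2)^2 := by nlinarith
  have h2 : (s-1)^2*(s+2) ≤ s^3 := by nlinarith
  have h2nn : 0 ≤ (s-1)^2*(s+2) := by positivity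
  have h2' : ((s-1)^2*(s+2))^2 ≤ (s^3)^2 := pow_le_pow_left₀ h2nn h2 2
  have key : ((m+1)*(m+3)) * (((s-1)^2*(s+2))^2) ≤ ((m+2)^2) * ((s^3)^2) :=
    mul_le_mul h1 h2' (by positivity) (by positivity)
  nlinarith [mul_le_mul_of_nonneg_left key (show (0:ℝ) ≤ m+1 by linarith)]

/-- core polynomial inequality for (B) -/
lemma polyB {m s : ℝ} (hm : 0 ≤ m) (hs : m + 2 ≤ s) :
    (m+2)^4 * (m+3) * (s+2)^2 ≤ 16 * s^4 * (m+2) * (s+1)^2 := by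
  have hs2 : (2:ℝ) ≤ s := by linarith
  have e1 : (m+2)^3 ≤ s^3 := pow_le_pow_left₀ (by linarith) (by linarith) 3
  have e2 : (m+3) ≤ s+1 := by linarith
  have e3 : (s+2)^2 ≤ 4*(s+1)^2 := by nlinarith
  have k1 : (m+2)^3 * (m+3) ≤ s^3 * (s+1) :=
    mul_le_mul e1 e2 (by linarith) (by positivity)
  have k2 : ((m+2)^3 * (m+3)) * (s+2)^2 ≤ (s^3 * (s+1)) * (4*(s+1)^2) :=
    mul_le_mul k1 e3 (by positivity) (by positivity)
  have k3 : (s^3 * (s+1)) * (4*(s+1)^2) ≤ 4 * s^3 * (s+1)^2 * (s+1) := by nlinarith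
  have k4 : s + 1 ≤ 4 * s := by linarith
  nlinarith [mul_le_mul_of_nonneg_left k4 (show (0:ℝ) ≤ 4 * s^3 * (s+1)^2 * (m+2) by positivity),
    mul_le_mul_of_nonneg_left k2 (show (0:ℝ) ≤ (m+2) by linarith)]


lemma B_nonneg {m n : ℕ} (hn : 2 ≤ n) : 0 ≤ B m n := (B_pos hn).le

lemma w4 (n m : ℕ) : (w n m)^4 = 1 / ((((m:ℝ))+1) * (((m:ℝ))+(n:ℝ))^2) := by
  unfold w q
  rw [div_pow, mul_pow, pow4_sqrt_sqrt (by positivity), pow4_sqrt (by positivity), one_pow]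

lemma B4 (n m : ℕ) : (B m n)^4 = (1/16) * ((((m:ℝ))+1)^2 * (((m:ℝ))+(n:ℝ)-1)^4) := by
  unfold B
  rw [mul_pow, mul_pow, pow4_sqrt (by positivity)]
  norm_num
  ring

lemma dlt4 (m : ℕ) : (dlt m)^4 = 256 / ((((m:ℝ))+1)^6) := by
  unfold dlt
  rw [div_pow, mul_pow, pow4_sqrt (by positivity)]
  norm_num
  ring

lemma cast_ge {n : ℕ} (hn : 2 ≤ n) (m : ℕ) : (m:ℝ) + 2 ≤ (m:ℝ) + (n:ℝ) := by
  have : (2:ℝ) ≤ (n:ℝ) := by exact_mod_cast hn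
  linarith

lemma ineqA {n : ℕ} (hn : 2 ≤ n) (m : ℕ) :
    B m n * w n m ≤ B (m+1) n * w n (m+2) := by
  have hM : (0:ℝ) ≤ (m:ℝ) := Nat.cast_nonneg m
  have hS := cast_ge hn m
  refine le_of_pow4 (mul_nonneg (B_nonneg hn) (w_pos hn _).le) ?_
  rw [mul_pow, mul_pow, B4, B4, w4, w4]
  push_cast
  rw [mul_one_div, mul_one_div, div_le_div_iff₀ (by positivity) (by positivity)]
  nlinarith [polyA hM hS]

lemma ineqB {n : ℕ} (hn : 2 ≤ n) (m : ℕ) :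
    w n (m+1) ≤ dlt (m+1) * (B (m+1) n * w n (m+2)) := by
  have hM : (0:ℝ) ≤ (m:ℝ) := Nat.cast_nonneg m
  have hS := cast_ge hn m
  refine le_of_pow4
    (mul_nonneg (dlt_pos _).le (mul_nonneg (B_nonneg hn) (w_pos hn _).le)) ?_
  rw [mul_pow, mul_pow, B4, w4, w4, dlt4]
  push_cast
  rw [mul_one_div, div_mul_eq_mul_div, mul_div_assoc', div_div,
    div_le_div_iff₀ (by positivity) (by positivity)]
  nlinarith [polyB hM hS]

def C0 (n : ℕ) : ℝ := max (‖xseq n 0‖ / w n 0) (‖xseq n 1‖ / w n 1)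

lemma C0_nonneg {n : ℕ} (hn : 2 ≤ n) : 0 ≤ C0 n :=
  le_trans (div_nonneg (norm_nonneg _) (w_pos hn 0).le) (le_max_left _ _)

lemma xbound {n : ℕ} (hn : 2 ≤ n) : ∀ m, ‖xseq n m‖ ≤ C0 n * (E m * w n m) := by
  have hbase : ∀ k, k ≤ 1 → ‖xseq n k‖ ≤ C0 n * (E k * w n k) := by
    intro k hk
    have hw := w_pos hn k
    have hC : ‖xseq n k‖ / w n k ≤ C0 n := by
      interval_cases k
      · exact le_max_left _ _
      · exact le_max_right _ _
    have h1 : ‖xseq n k‖ ≤ C0 n * w n k := by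
      rw [div_le_iff₀ hw] at hC
      linarith
    have hE := one_le_E k
    have h2 : C0 n * (1 * w n k) ≤ C0 n * (E k * w n k) :=
      mul_le_mul_of_nonneg_left (mul_le_mul_of_nonneg_right hE hw.le) (C0_nonneg hn)
    rw [one_mul] at h2
    linarith
  have main : ∀ m, ‖xseq n m‖ ≤ C0 n * (E m * w n m) ∧
      ‖xseq n (m+1)‖ ≤ C0 n * (E (m+1) * w n (m+1)) := by
    intro m
    induction m with
    | zero => exact ⟨hbase 0 (by norm_num), hbase 1 (by norm_num)⟩
    | succ m ih =>
      refine ⟨ih.2, ?_⟩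
      obtain ⟨ih1, ih2⟩ := ih
      show ‖xseq n (m+2)‖ ≤ C0 n * (E (m+2) * w n (m+2))
      have hB1 : (0:ℝ) < B (m+1) n := B_pos hn
      have hBnn : (0:ℝ) ≤ B m n := B_nonneg hn
      have hbne : ((beta (m+1) n : ℝ) : ℂ) ≠ 0 := Complex.ofReal_ne_zero.2 (beta_ne hn)
      have hx2 : ‖xseq n (m+2)‖ * B (m+1) n ≤ ‖xseq n (m+1)‖ + B m n * ‖xseq n m‖ := by
        have heq : ‖xseq n (m+2)‖ * B (m+1) n
            = ‖Complex.I * xseq n (m+1) - (beta m n : ℂ) * xseq n m‖ := by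
          rw [← norm_beta hn, ← norm_mul]
          congr 1
          show (Complex.I * xseq n (m+1) - (beta m n : ℂ) * xseq n m) / _ * _ = _
          rw [div_mul_cancel₀ _ hbne]
        rw [heq]
        calc ‖Complex.I * xseq n (m+1) - (beta m n : ℂ) * xseq n m‖
            ≤ ‖Complex.I * xseq n (m+1)‖ + ‖(beta m n : ℂ) * xseq n m‖ := norm_sub_le _ _
          _ = ‖xseq n (m+1)‖ + B m n * ‖xseq n m‖ := by
              rw [norm_mul, norm_mul, Complex.norm_I, one_mul, norm_beta hn]
      have t3 : C0 n * (E m * w n m) ≤ C0 n * (E (m+1) * w n m) :=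
        mul_le_mul_of_nonneg_left
          (mul_le_mul_of_nonneg_right (E_mono m) (w_pos hn m).le) (C0_nonneg hn)
      have p2 : B m n * ‖xseq n m‖ ≤ B m n * (C0 n * (E m * w n m)) :=
        mul_le_mul_of_nonneg_left ih1 hBnn
      have p3 : B m n * (C0 n * (E m * w n m)) ≤ B m n * (C0 n * (E (m+1) * w n m)) :=
        mul_le_mul_of_nonneg_left t3 hBnn
      have hCE : (0:ℝ) ≤ C0 n * E (m+1) := mul_nonneg (C0_nonneg hn) (E_pos (m+1)).le
      have p4 : C0 n * E (m+1) * w n (m+1) ≤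
          C0 n * E (m+1) * (dlt (m+1) * (B (m+1) n * w n (m+2))) :=
        mul_le_mul_of_nonneg_left (ineqB hn m) hCE
      have p5 : C0 n * E (m+1) * (B m n * w n m) ≤
          C0 n * E (m+1) * (B (m+1) n * w n (m+2)) :=
        mul_le_mul_of_nonneg_left (ineqA hn m) hCE
      have hEs : E (m+2) = E (m+1) * (1 + dlt (m+1)) := E_succ (m+1)
      have chain : ‖xseq n (m+1)‖ + B m n * ‖xseq n m‖
          ≤ C0 n * (E (m+2) * w n (m+2)) * B (m+1) n := by
        rw [hEs]
        nlinarith [ih2, p2, p3, p4, p5]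
      exact le_of_mul_le_mul_right (hx2.trans chain) hB1
  exact fun m => (main m).1

lemma w_sq (n m : ℕ) : (w n m)^2 = 1 / (Real.sqrt ((m:ℝ)+1) * ((m:ℝ)+(n:ℝ))) := by
  unfold w q
  rw [div_pow, mul_pow, Real.sq_sqrt (Real.sqrt_nonneg _), Real.sq_sqrt (by positivity), one_pow]

lemma aux_summable : Summable (fun m : ℕ => 1 / ((m:ℝ) * Real.sqrt m)) := by
  have h := (Real.summable_one_div_nat_rpow (p := 3/2)).2 (by norm_num)
  refine h.congr fun m => ?_
  congr 1
  rw [show (3:ℝ)/2 = 1 + 1/2 by norm_num,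
    Real.rpow_add' (Nat.cast_nonneg m) (by norm_num), Real.rpow_one,
    ← Real.sqrt_eq_rpow]

lemma xsq_summable {n : ℕ} (hn : 2 ≤ n) : Summable (fun m : ℕ => ‖xseq n m‖^2) := by
  set K := (C0 n * Real.exp 16)^2 with hK
  have hKnn : 0 ≤ K := sq_nonneg _
  have hb : ∀ m : ℕ, 1 ≤ m → ‖xseq n m‖^2 ≤ K * (1/((m:ℝ) * Real.sqrt m)) := by
    intro m hm
    have h1 : ‖xseq n m‖ ≤ C0 n * Real.exp 16 * w n m := by
      have h2 := xbound hn m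
      have h3 : C0 n * (E m * w n m) ≤ C0 n * (Real.exp 16 * w n m) :=
        mul_le_mul_of_nonneg_left
          (mul_le_mul_of_nonneg_right (E_le m) (w_pos hn m).le) (C0_nonneg hn)
      calc ‖xseq n m‖ ≤ C0 n * (E m * w n m) := h2
        _ ≤ C0 n * (Real.exp 16 * w n m) := h3
        _ = C0 n * Real.exp 16 * w n m := by ring
    have h4 : ‖xseq n m‖^2 ≤ (C0 n * Real.exp 16 * w n m)^2 :=
      pow_le_pow_left₀ (norm_nonneg _) h1 2
    have h5 : (C0 n * Real.exp 16 * w n m)^2 = K * (w n m)^2 := by rw [hK]; ring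
    have hm1 : (1:ℝ) ≤ (m:ℝ) := by exact_mod_cast hm
    have h6 : (w n m)^2 ≤ 1/((m:ℝ) * Real.sqrt m) := by
      rw [w_sq]
      have hd1 : (0:ℝ) < (m:ℝ) * Real.sqrt m := by
        have : (0:ℝ) < Real.sqrt m := Real.sqrt_pos.2 (by linarith)
        nlinarith
      refine one_div_le_one_div_of_le hd1 ?_
      have e1 : Real.sqrt (m:ℝ) ≤ Real.sqrt ((m:ℝ)+1) := Real.sqrt_le_sqrt (by linarith)
      have e2 : (m:ℝ) ≤ (m:ℝ)+(n:ℝ) := by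
        have : (0:ℝ) ≤ (n:ℝ) := Nat.cast_nonneg n
        linarith
      calc (m:ℝ) * Real.sqrt m = Real.sqrt m * (m:ℝ) := by ring
        _ ≤ Real.sqrt ((m:ℝ)+1) * ((m:ℝ)+(n:ℝ)) :=
          mul_le_mul e1 e2 (by linarith) (Real.sqrt_nonneg _)
    calc ‖xseq n m‖^2 ≤ K * (w n m)^2 := by rw [← h5]; exact h4
      _ ≤ K * (1/((m:ℝ) * Real.sqrt m)) :=
        mul_le_mul_of_nonneg_left h6 hKnn
  rw [← summable_nat_add_iff 1]
  have hS : Summable (fun m : ℕ => K * (1/(((m+1:ℕ):ℝ) * Real.sqrt ((m+1:ℕ):ℝ)))) :=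
    ((summable_nat_add_iff 1).2 (aux_summable.mul_left K))
  refine Summable.of_nonneg_of_le (fun m => sq_nonneg _) (fun m => ?_) hS
  exact hb (m+1) (Nat.le_add_left 1 m)

/-- the candidate deficiency vector in column `n` -/
def gcol (n : ℕ) : ℕ × ℕ → ℂ := fun p => if p.2 = n then xseq n p.1 else 0

lemma gcol_jacobi {n : ℕ} (hn : 2 ≤ n) (p : ℕ × ℕ) :
    jacobiAct (gcol n) p = Complex.I * gcol n p := by
  unfold jacobiAct gcol
  by_cases h : p.2 = n
  · simp only [h, if_pos rfl]
    have := eigen hn p.1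
    by_cases h0 : p.1 = 0
    · simpa [h0] using eigen hn 0
    · simpa [h0] using eigen hn p.1
  · simp [h]

lemma gcol_memℓp {n : ℕ} (hn : 2 ≤ n) : Memℓp (gcol n) 2 := by
  apply memℓp_gen
  have h2 : ((2:ℝ≥0∞)).toReal = (2:ℝ) := by norm_num
  rw [h2]
  have hι : Function.Injective (fun m : ℕ => ((m, n) : ℕ × ℕ)) := by
    intro a b hab
    simpa using congrArg Prod.fst hab
  have hzero : ∀ p ∉ Set.range (fun m : ℕ => ((m, n) : ℕ × ℕ)),
      ‖gcol n p‖ ^ (2:ℝ) = 0 := by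
    intro p hp
    have : p.2 ≠ n := by
      intro h
      exact hp ⟨p.1, by simp [Prod.ext_iff, h.symm]⟩
    simp only [gcol, if_neg this, norm_zero]
    rw [Real.zero_rpow (by norm_num)]
  rw [← hι.summable_iff hzero]
  refine (xsq_summable hn).congr fun m => ?_
  show ‖xseq n m‖^2 = ‖gcol n (m, n)‖ ^ (2:ℝ)
  simp only [gcol, if_pos rfl]
  rw [← Real.rpow_natCast ‖xseq n m‖ 2]
  norm_num

lemma gcol_conj_jacobi {n : ℕ} (hn : 2 ≤ n) (p : ℕ × ℕ) :
    jacobiAct (fun q => (starRingEnd ℂ) (gcol n q)) p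
      = (-Complex.I) * (starRingEnd ℂ) (gcol n p) := by
  have h := congrArg (starRingEnd ℂ) (gcol_jacobi hn p)
  rw [map_mul, Complex.conj_I] at h
  rw [← h]
  unfold jacobiAct
  rw [map_add, map_mul, Complex.conj_ofReal]
  by_cases h0 : p.1 = 0
  · simp [h0]
  · rw [if_neg h0, if_neg h0, map_mul, Complex.conj_ofReal]

lemma gcol_conj_memℓp {n : ℕ} (hn : 2 ≤ n) :
    Memℓp (fun q => (starRingEnd ℂ) (gcol n q)) 2 := by
  apply memℓp_gen
  have h := lp.memℓp (⟨gcol n, gcol_memℓp hn⟩ : lp (fun _ : ℕ × ℕ => ℂ) 2)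
  have h2 := h.summable (p := 2) (by norm_num)
  refine h2.congr fun p => ?_
  simp [RCLike.norm_conj]

section FA

open LinearPMap

local notation "⟪" x ", " y "⟫" => @inner ℂ _ _ x y

variable {T : H2 →ₗ.[ℂ] H2}

lemma dense_dom (hdom : ∀ f : H2, f ∈ T.domain ↔ {p : ℕ × ℕ | f p ≠ 0}.Finite) :
    Dense (T.domain : Set H2) := by
  intro f
  have hsum := lp.hasSum_single (p := (2:ℝ≥0∞)) (by norm_num) f
  refine mem_closure_of_tendsto hsum (Filter.Eventually.of_forall fun s => ?_)
  refine (hdom _).2 (Set.Finite.subset s.finite_toSet ?_)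
  intro p hp
  simp only [Set.mem_setOf_eq] at hp
  by_contra hps
  apply hp
  rw [lp.coeFn_sum, Finset.sum_apply]
  refine Finset.sum_eq_zero fun i hi => ?_
  exact lp.single_apply_ne 2 i _ (fun h => hps (by simpa [h] using hi))

lemma summable_of_fin_supp {F : ℕ × ℕ → ℂ} {S : Set (ℕ × ℕ)} (hS : S.Finite)
    (h : ∀ p, p ∉ S → F p = 0) : Summable F :=
  summable_of_ne_finset_zero (s := hS.toFinset)
    fun p hp => h p fun hmem => hp (hS.mem_toFinset.2 hmem)

lemma key_inner (hdom : ∀ f : H2, f ∈ T.domain ↔ {p : ℕ × ℕ | f p ≠ 0}.Finite)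
    (hact : ∀ f : T.domain, ∀ p : ℕ × ℕ, (T f : H2) p = jacobiAct (⇑(f : H2)) p)
    (g h : H2) (hjac : ∀ p, h p = jacobiAct (⇑g) p) (x : T.domain) :
    ⟪h, ((x : H2) : H2)⟫ = ⟪g, T x⟫ := by
  rw [lp.inner_eq_tsum, lp.inner_eq_tsum]
  simp only [RCLike.inner_apply]
  set f : ℕ × ℕ → ℂ := ⇑(x : H2) with hf
  have hfin : {p : ℕ × ℕ | f p ≠ 0}.Finite := (hdom _).1 x.2
  set S := {p : ℕ × ℕ | f p ≠ 0} with hS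
  set F1 : ℕ × ℕ → ℂ := fun p => (beta p.1 p.2 : ℂ) * conj (g (p.1+1, p.2)) * f p with hF1
  set F2 : ℕ × ℕ → ℂ := fun p =>
    (if p.1 = 0 then 0 else (beta (p.1-1) p.2 : ℂ) * conj (g (p.1-1, p.2))) * f p with hF2
  set G1 : ℕ × ℕ → ℂ := fun p => conj (g p) * ((beta p.1 p.2 : ℂ) * f (p.1+1, p.2)) with hG1
  set G2 : ℕ × ℕ → ℂ := fun p =>
    (if p.1 = 0 then 0 else conj (g p) * ((beta (p.1-1) p.2 : ℂ) * f (p.1-1, p.2))) with hG2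
  have hsF1 : Summable F1 := by
    refine summable_of_fin_supp hfin fun p hp => ?_
    have : f p = 0 := by simpa [hS] using hp
    simp [hF1, this]
  have hsF2 : Summable F2 := by
    refine summable_of_fin_supp hfin fun p hp => ?_
    have : f p = 0 := by simpa [hS] using hp
    simp [hF2, this]
  have hsG1 : Summable G1 := by
    refine summable_of_fin_supp (hfin.image (fun q => (q.1 - 1, q.2))) fun p hp => ?_
    by_contra hne
    apply hp
    have hfp : f (p.1+1, p.2) ≠ 0 := by
      intro h0
      exact hne (by simp [hG1, h0])
    exact ⟨(p.1+1, p.2), hfp, by simp⟩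
  have hsG2 : Summable G2 := by
    refine summable_of_fin_supp (hfin.image (fun q => (q.1 + 1, q.2))) fun p hp => ?_
    by_cases h0 : p.1 = 0
    · simp [hG2, h0]
    by_contra hne
    apply hp
    have hfp : f (p.1-1, p.2) ≠ 0 := by
      intro hz
      exact hne (by simp [hG2, hz, h0])
    refine ⟨(p.1-1, p.2), hfp, ?_⟩
    show ((p.1-1)+1, p.2) = p
    rw [Prod.ext_iff]
    exact ⟨Nat.succ_pred_eq_of_pos (Nat.pos_of_ne_zero h0), rfl⟩
  have hι : Function.Injective (fun q : ℕ × ℕ => ((q.1 + 1, q.2) : ℕ × ℕ)) := by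
    intro a b hab
    rw [Prod.ext_iff] at hab ⊢
    simp only [Prod.mk.injEq] at hab
    exact ⟨by omega, hab.2⟩
  have hrange : ∀ p : ℕ × ℕ, p ∉ Set.range (fun q : ℕ × ℕ => ((q.1 + 1, q.2) : ℕ × ℕ)) →
      p.1 = 0 := by
    intro p hp
    by_contra h0
    exact hp ⟨(p.1 - 1, p.2), Prod.ext (Nat.succ_pred_eq_of_pos (Nat.pos_of_ne_zero h0)) rfl⟩
  -- LHS decomposition
  have hLHS : ∑' p, conj (h p) * f p = (∑' p, F1 p) + (∑' p, F2 p) := by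
    rw [← Summable.tsum_add hsF1 hsF2]
    refine tsum_congr fun p => ?_
    rw [hjac p]
    unfold jacobiAct
    rw [_root_.map_add, add_mul]
    congr 1
    · simp only [hF1, map_mul, Complex.conj_ofReal]
    · simp only [hF2]
      by_cases h0 : p.1 = 0
      · simp [h0]
      · rw [if_neg h0, if_neg h0, map_mul, Complex.conj_ofReal]
  -- RHS decomposition
  have hRHS : ∑' p, conj (g p) * (T x) p = (∑' p, G1 p) + (∑' p, G2 p) := by
    rw [← Summable.tsum_add hsG1 hsG2]
    refine tsum_congr fun p => ?_
    rw [hact x p]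
    unfold jacobiAct
    rw [mul_add]
    congr 1
    simp only [hG2, mul_ite, mul_zero]
    rfl
  -- F2 = G1 via reindexing
  have hF2G1 : ∑' p, F2 p = ∑' p, G1 p := by
    have hsupp : Function.support F2 ⊆ Set.range (fun q : ℕ × ℕ => ((q.1 + 1, q.2) : ℕ × ℕ)) := by
      intro p hp
      by_contra hc
      exact hp (by simp [hF2, hrange p hc])
    rw [← hι.tsum_eq (f := F2) hsupp]
    refine tsum_congr fun q => ?_
    show (if q.1+1 = 0 then 0 else ((beta (q.1+1-1) q.2 : ℂ)) * conj (g (q.1+1-1, q.2))) * f (q.1+1, q.2) = _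
    rw [if_neg (Nat.succ_ne_zero q.1)]
    simp only [hG1, Nat.add_sub_cancel]
    ring
  -- F1 = G2 via reindexing
  have hF1G2 : ∑' p, F1 p = ∑' p, G2 p := by
    have hsupp : Function.support G2 ⊆ Set.range (fun q : ℕ × ℕ => ((q.1 + 1, q.2) : ℕ × ℕ)) := by
      intro p hp
      by_contra hc
      exact hp (by simp [hG2, hrange p hc])
    rw [← hι.tsum_eq (f := G2) hsupp]
    refine tsum_congr fun q => ?_
    show _ = (if q.1+1 = 0 then 0 else conj (g (q.1+1, q.2)) * ((beta (q.1+1-1) q.2 : ℂ) * f (q.1+1-1, q.2)))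
    rw [if_neg (Nat.succ_ne_zero q.1)]
    simp only [hF1, Nat.add_sub_cancel]
    ring
  calc _ = ∑' p, conj (h p) * f p := tsum_congr fun p => mul_comm _ _
    _ = ∑' p, conj (g p) * (T x) p := by rw [hLHS, hRHS, hF2G1, hF1G2, add_comm]
    _ = _ := tsum_congr fun p => mul_comm _ _

end FA

section FA2

open LinearPMap

local notation "⟪" x ", " y "⟫" => @inner ℂ _ _ x y

variable {T : H2 →ₗ.[ℂ] H2}

/-- evaluation at a point as a linear map -/
def evp (p : ℕ × ℕ) : H2 →ₗ[ℂ] ℂ where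
  toFun f := f p
  map_add' f g := by simp only [lp.coeFn_add, Pi.add_apply]
  map_smul' c f := by simp only [lp.coeFn_smul, Pi.smul_apply, smul_eq_mul, RingHom.id_apply]

lemma mem_adjoint (hdom : ∀ f : H2, f ∈ T.domain ↔ {p : ℕ × ℕ | f p ≠ 0}.Finite)
    (hact : ∀ f : T.domain, ∀ p : ℕ × ℕ, (T f : H2) p = jacobiAct (⇑(f : H2)) p)
    {g h : H2} (hjac : ∀ p, h p = jacobiAct (⇑g) p) :
    ∃ hg : g ∈ T.adjoint.domain, T.adjoint ⟨g, hg⟩ = h := by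
  have hT : Dense (T.domain : Set H2) := dense_dom hdom
  have hg : g ∈ T.adjoint.domain :=
    mem_adjoint_domain_of_exists g ⟨h, fun x => key_inner hdom hact g h hjac x⟩
  exact ⟨hg, adjoint_apply_eq hT ⟨g, hg⟩ fun x => key_inner hdom hact g h hjac x⟩

lemma ker_infinite_aux {D : Submodule ℂ H2} (A : ↥D →ₗ[ℂ] H2)
    (v : ℕ → H2) (hv : ∀ j, ∃ hm : v j ∈ D, A ⟨v j, hm⟩ = 0)
    (hval : ∀ i j : ℕ, (v j) (0, i+2) = if i = j then 1 else 0) :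
    ¬ Module.Finite ℂ (LinearMap.ker A) := by
  intro hfin
  set u : ℕ → LinearMap.ker A := fun j =>
    ⟨⟨v j, (hv j).choose⟩, LinearMap.mem_ker.2 (hv j).choose_spec⟩ with hu
  have hli : LinearIndependent ℂ u := by
    rw [linearIndependent_iff']
    intro s c hsum i hi
    set φ : ↥(LinearMap.ker A) →ₗ[ℂ] ℂ :=
      (evp (0, i+2)).comp (D.subtype.comp (LinearMap.ker A).subtype) with hφ
    have h0 := congrArg φ hsum
    rw [_root_.map_zero, map_sum] at h0
    have hterm : ∀ j ∈ s, φ (c j • u j) = if i = j then c j else 0 := by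
      intro j _
      rw [_root_.map_smul]
      have : φ (u j) = (v j) (0, i+2) := rfl
      rw [this, hval i j]
      by_cases hij : i = j <;> simp [hij]
    rw [Finset.sum_congr rfl hterm, Finset.sum_ite_eq s i c, if_pos hi] at h0
    exact h0
  haveI := hli.finite
  exact not_finite ℕ

end FA2

lemma xseq_zero (n : ℕ) : xseq n 0 = 1 := rfl

lemma gcol_val (i j : ℕ) : gcol (j+2) (0, i+2) = if i = j then 1 else 0 := by
  unfold gcol
  by_cases h : i = j
  · simp [h, xseq_zero]
  · have hne : (i+2 : ℕ) ≠ (j+2) := by omega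
    simp [hne, h]

section Assemble

open LinearPMap

local notation "⟪" x ", " y "⟫" => @inner ℂ _ _ x y

variable {T : H2 →ₗ.[ℂ] H2}

/-- the `+i` eigenvector of the adjoint, in column `n` -/
def Gp (n : ℕ) (hn : 2 ≤ n) : H2 := ⟨gcol n, gcol_memℓp hn⟩

/-- the `-i` eigenvector of the adjoint, in column `n` -/
def Gm (n : ℕ) (hn : 2 ≤ n) : H2 := ⟨fun q => (starRingEnd ℂ) (gcol n q), gcol_conj_memℓp hn⟩

lemma Gp_spec (hdom : ∀ f : H2, f ∈ T.domain ↔ {p : ℕ × ℕ | f p ≠ 0}.Finite)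
    (hact : ∀ f : T.domain, ∀ p : ℕ × ℕ, (T f : H2) p = jacobiAct (⇑(f : H2)) p)
    {n : ℕ} (hn : 2 ≤ n) :
    ∃ hm : Gp n hn ∈ T.adjoint.domain,
      T.adjoint ⟨Gp n hn, hm⟩ = Complex.I • Gp n hn := by
  refine mem_adjoint hdom hact fun p => ?_
  simp only [lp.coeFn_smul, Pi.smul_apply, smul_eq_mul]
  exact (gcol_jacobi hn p).symm

lemma Gm_spec (hdom : ∀ f : H2, f ∈ T.domain ↔ {p : ℕ × ℕ | f p ≠ 0}.Finite)
    (hact : ∀ f : T.domain, ∀ p : ℕ × ℕ, (T f : H2) p = jacobiAct (⇑(f : H2)) p)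
    {n : ℕ} (hn : 2 ≤ n) :
    ∃ hm : Gm n hn ∈ T.adjoint.domain,
      T.adjoint ⟨Gm n hn, hm⟩ = (-Complex.I) • Gm n hn := by
  refine mem_adjoint hdom hact fun p => ?_
  simp only [lp.coeFn_smul, Pi.smul_apply, smul_eq_mul]
  exact (gcol_conj_jacobi hn p).symm

lemma ker_plus (hdom : ∀ f : H2, f ∈ T.domain ↔ {p : ℕ × ℕ | f p ≠ 0}.Finite)
    (hact : ∀ f : T.domain, ∀ p : ℕ × ℕ, (T f : H2) p = jacobiAct (⇑(f : H2)) p) :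
    ¬ Module.Finite ℂ
      (LinearMap.ker (T.adjoint.toFun - Complex.I • T.adjoint.domain.subtype)) := by
  refine ker_infinite_aux _ (fun j => Gp (j+2) (Nat.le_add_left 2 j)) (fun j => ?_) (fun i j => ?_)
  · obtain ⟨hm, hval⟩ := Gp_spec hdom hact (n := j+2) (Nat.le_add_left 2 j)
    refine ⟨hm, ?_⟩
    rw [LinearMap.sub_apply, LinearMap.smul_apply]
    show T.adjoint ⟨Gp (j+2) (Nat.le_add_left 2 j), hm⟩ - Complex.I • (Gp (j+2) (Nat.le_add_left 2 j)) = 0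
    rw [hval, sub_self]
  · exact gcol_val i j

lemma ker_minus (hdom : ∀ f : H2, f ∈ T.domain ↔ {p : ℕ × ℕ | f p ≠ 0}.Finite)
    (hact : ∀ f : T.domain, ∀ p : ℕ × ℕ, (T f : H2) p = jacobiAct (⇑(f : H2)) p) :
    ¬ Module.Finite ℂ
      (LinearMap.ker (T.adjoint.toFun + Complex.I • T.adjoint.domain.subtype)) := by
  refine ker_infinite_aux _ (fun j => Gm (j+2) (Nat.le_add_left 2 j)) (fun j => ?_) (fun i j => ?_)
  · obtain ⟨hm, hval⟩ := Gm_spec hdom hact (n := j+2) (Nat.le_add_left 2 j)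
    refine ⟨hm, ?_⟩
    rw [LinearMap.add_apply, LinearMap.smul_apply]
    show T.adjoint ⟨Gm (j+2) (Nat.le_add_left 2 j), hm⟩ + Complex.I • (Gm (j+2) (Nat.le_add_left 2 j)) = 0
    rw [hval, ← add_smul]
    norm_num
  · show (starRingEnd ℂ) (gcol (j+2) (0, i+2)) = _
    rw [gcol_val i j]
    by_cases h : i = j <;> simp [h]

lemma not_selfAdjoint (hdom : ∀ f : H2, f ∈ T.domain ↔ {p : ℕ × ℕ | f p ≠ 0}.Finite)
    (hact : ∀ f : T.domain, ∀ p : ℕ × ℕ, (T f : H2) p = jacobiAct (⇑(f : H2)) p) :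
    ¬ IsSelfAdjoint T.closure := by
  intro hsa
  have hTdense : Dense (T.domain : Set H2) := dense_dom hdom
  have hsaEq : T.closure.adjoint = T.closure := isSelfAdjoint_def.mp hsa
  have hAdense : Dense (T.closure.domain : Set H2) := hsa.dense_domain
  -- the adjoint of `T` is a formal adjoint of the closure of `T`
  have formal : T.adjoint.IsFormalAdjoint T.closure := by
    intro u y
    set φ : H2 × H2 → ℂ := fun z => ⟪(T.adjoint u : H2), z.1⟫ - ⟪(u : H2), z.2⟫ with hφ
    have hcont : Continuous φ :=
      (((innerSL ℂ ((T.adjoint u : H2))).continuous).comp continuous_fst).sub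
        (((innerSL ℂ ((u : H2))).continuous).comp continuous_snd)
    have hgraph : (T.graph : Set (H2 × H2)) ⊆ φ ⁻¹' {0} := by
      intro z hz
      have hz' : z ∈ T.graph := hz
      rw [LinearPMap.mem_graph_iff] at hz'
      obtain ⟨x, hx1, hx2⟩ := hz' 
      simp only [Set.mem_preimage, Set.mem_singleton_iff, hφ, ← hx1, ← hx2]
      rw [sub_eq_zero]
      exact adjoint_isFormalAdjoint hTdense u x
    have hclosed : IsClosed (φ ⁻¹' {0}) := isClosed_singleton.preimage hcont
    have hmemgraph : ((y : H2), T.closure y) ∈ T.closure.graph := mem_graph _ y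
    have hzero : φ ((y : H2), T.closure y) = 0 := by
      by_cases hc : T.IsClosable
      · have hGC := hc.graph_closure_eq_closure_graph
        rw [← hGC] at hmemgraph
        have hmemcl : ((y : H2), T.closure y) ∈ closure (T.graph : Set (H2 × H2)) := by
          rw [← Submodule.topologicalClosure_coe]
          exact hmemgraph
        exact closure_minimal hgraph hclosed hmemcl
      · have hTT : T.closure.graph = T.graph := by rw [closure_def' hc]
        exact hgraph (hTT ▸ hmemgraph)
    have := sub_eq_zero.mp hzero
    exact this
  have le1 : T.adjoint ≤ T.closure := by
    have h2 := LinearPMap.IsFormalAdjoint.le_adjoint hAdense formal.symm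
    rwa [hsaEq] at h2
  -- transport the eigenvector
  obtain ⟨hm2, hval2⟩ := Gp_spec hdom hact (n := 2) le_rfl
  set G : H2 := Gp 2 le_rfl with hG
  have hmemA : G ∈ T.closure.domain := le1.1 hm2
  have hvalA : T.closure ⟨G, hmemA⟩ = Complex.I • G := by
    rw [← hval2]
    exact (le1.2 rfl).symm
  have hmem' : G ∈ T.closure.adjoint.domain := by rw [hsaEq]; exact hmemA
  have hval' : T.closure.adjoint ⟨G, hmem'⟩ = Complex.I • G := by
    have hle : T.closure.adjoint ≤ T.closure := le_of_eq hsaEq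
    rw [← hvalA]
    exact hle.2 rfl
  have key := adjoint_isFormalAdjoint hAdense (⟨G, hmem'⟩ : T.closure.adjoint.domain)
    (⟨G, hmemA⟩ : T.closure.domain)
  rw [hval', hvalA] at key
  simp only [Submodule.coe_mk] at key
  rw [inner_smul_left, inner_smul_right, Complex.conj_I] at key
  have hz : (⟪G, G⟫ : ℂ) = 0 := by
    have h2I : (2 * Complex.I : ℂ) ≠ 0 := by
      simp [Complex.I_ne_zero]
    have h0 : (2 * Complex.I) * (⟪G, G⟫ : ℂ) = 0 := by linear_combination -key
    exact (mul_eq_zero.mp h0).resolve_left h2I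
  have hG0 : G = 0 := inner_self_eq_zero.mp hz
  have h1 : gcol 2 (0, 2) = 1 := by simp [gcol, xseq_zero]
  have h0 : (G : ∀ _ : ℕ × ℕ, ℂ) (0, 2) = 0 := by rw [hG0]; rfl
  have : gcol 2 (0, 2) = 0 := h0
  rw [h1] at this
  exact one_ne_zero this

end Assemble

end CP

/-- Both deficiency subspaces `ker(T* ∓ i)` of the Calvo–Picón operator `T` are
infinite-dimensional; in particular `T` is not essentially self-adjoint. -/
theorem deficiency_indices_of_CalvoPicon_T4_infinite
    (T : H2 →ₗ.[ℂ] H2)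
    (hdom : ∀ f : H2, f ∈ T.domain ↔ {p : ℕ × ℕ | f p ≠ 0}.Finite)
    (hact : ∀ f : T.domain, ∀ p : ℕ × ℕ,
      (T f : H2) p = jacobiAct (⇑(f : H2)) p) :
    ¬ Module.Finite ℂ
      (LinearMap.ker (T.adjoint.toFun - Complex.I • T.adjoint.domain.subtype)) ∧
    ¬ Module.Finite ℂ
      (LinearMap.ker (T.adjoint.toFun + Complex.I • T.adjoint.domain.subtype)) ∧
    ¬ IsSelfAdjoint T.closure := by
  exact ⟨CP.ker_plus hdom hact, CP.ker_minus hdom hact, CP.not_selfAdjoint hdom hact⟩
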